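/- Let κ ∈ ℝ^{n×s} and ϑ ∈ ℝ^{s×q} have full column rank, and set τ := κ ϑ ∈ ℝ^{n×q}. Then the n×(n−q) matrix (κ_⊥, κ(κᵀκ)⁻¹ϑ_⊥), obtained by placing the columns of κ_⊥ next to the columns of κ(κᵀκ)⁻¹ϑ_⊥, has full column rank n − q, and its columns span the orthogonal complement of the column space of τ; in particular τᵀ(κ_⊥, κ(κᵀκ)⁻¹ϑ_⊥) = 0. (Intermediate claim in the proof of Theorem 1: τ_⊥ = (κ_⊥, κ̄ϑ_⊥).) -/

import Mathlib

open Matrix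

lemma aux_rank_iff {m I : Type*} [Fintype m] [Fintype I] [DecidableEq I]
    (M : Matrix m I ℝ) :
    M.rank = Fintype.card I ↔ Function.Injective M.mulVecLin := by
  rw [← LinearMap.ker_eq_bot, Matrix.rank]
  have h := LinearMap.finrank_range_add_finrank_ker M.mulVecLin
  rw [Module.finrank_fintype_fun_eq_card] at h
  constructor
  · intro hr
    have : Module.finrank ℝ (LinearMap.ker M.mulVecLin) = 0 := by omega
    exact Submodule.finrank_eq_zero.mp this
  · intro hk
    rw [hk] at h
    simp at h
    omega

theorem stmt7 {n s q : ℕ} (hq : q ≤ s) (hs : s ≤ n)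
    (κ : Matrix (Fin n) (Fin s) ℝ) (hκ : κ.rank = s)
    (ϑ : Matrix (Fin s) (Fin q) ℝ) (hϑ : ϑ.rank = q)
    (κperp : Matrix (Fin n) (Fin (n - s)) ℝ)
    (hκperp : κᵀ * κperp = 0) (hκperpr : κperp.rank = n - s)
    (ϑperp : Matrix (Fin s) (Fin (s - q)) ℝ)
    (hϑperp : ϑᵀ * ϑperp = 0) (hϑperpr : ϑperp.rank = s - q) :
    (Matrix.fromCols κperp (κ * (κᵀ * κ)⁻¹ * ϑperp)).rank = n - q ∧
    (κ * ϑ)ᵀ * Matrix.fromCols κperp (κ * (κᵀ * κ)⁻¹ * ϑperp) = 0 := by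
  -- κᵀκ is invertible
  have hrk : (κᵀ * κ).rank = Fintype.card (Fin s) := by
    rw [Matrix.rank_transpose_mul_self, hκ, Fintype.card_fin]
  have hunit : IsUnit (κᵀ * κ) := by
    rw [← Matrix.mulVec_injective_iff_isUnit]
    exact (aux_rank_iff _).mp hrk
  have hdet : IsUnit (κᵀ * κ).det := (Matrix.isUnit_iff_isUnit_det _).mp hunit
  have hkey : κᵀ * (κ * (κᵀ * κ)⁻¹ * ϑperp) = ϑperp := by
    rw [show κᵀ * (κ * (κᵀ * κ)⁻¹ * ϑperp) = (κᵀ * κ) * (κᵀ * κ)⁻¹ * ϑperp by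
      simp only [Matrix.mul_assoc], Matrix.mul_nonsing_inv _ hdet, Matrix.one_mul]
  constructor
  · have hinj : Function.Injective (Matrix.fromCols κperp
        (κ * (κᵀ * κ)⁻¹ * ϑperp)).mulVecLin := by
      rw [← LinearMap.ker_eq_bot, LinearMap.ker_eq_bot']
      intro v hv
      rw [Matrix.mulVecLin_apply] at hv
      have hv' : Matrix.fromCols κperp (κ * (κᵀ * κ)⁻¹ * ϑperp) *ᵥ
          Sum.elim (v ∘ Sum.inl) (v ∘ Sum.inr) = 0 := by
        convert hv using 2 <;> ext (i | i) <;> rfl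
      rw [Matrix.fromCols_mulVec_sumElim] at hv'
      have h2 : ϑperp *ᵥ (v ∘ Sum.inr) = 0 := by
        have := congrArg (fun w => κᵀ *ᵥ w) hv'
        simpa [Matrix.mulVec_add, Matrix.mulVec_mulVec, hκperp, hkey] using this
      have hinj2 : Function.Injective ϑperp.mulVecLin :=
        (aux_rank_iff _).mp (by rw [hϑperpr, Fintype.card_fin])
      have hv2 : v ∘ Sum.inr = 0 := by
        apply hinj2; simpa [Matrix.mulVecLin_apply] using h2
      have h1 : κperp *ᵥ (v ∘ Sum.inl) = 0 := by
        rw [hv2] at hv'; simpa using hv'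
      have hinj1 : Function.Injective κperp.mulVecLin :=
        (aux_rank_iff _).mp (by rw [hκperpr, Fintype.card_fin])
      have hv1 : v ∘ Sum.inl = 0 := by
        apply hinj1; simpa [Matrix.mulVecLin_apply] using h1
      ext (i | i)
      · exact congrFun hv1 i
      · exact congrFun hv2 i
    have := (aux_rank_iff _).mpr hinj
    rw [this]
    simp [Fintype.card_sum]
    omega
  · rw [Matrix.transpose_mul, Matrix.mul_assoc, Matrix.mul_fromCols, hκperp, hkey,
      Matrix.mul_fromCols, Matrix.mul_zero, hϑperp]
    ext i j; cases j <;> simp [Matrix.fromCols]
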